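/- arXiv:2402.15635 — 3 statements merged into one kernel-verified Lean document; each statement's English description precedes it below -/
import Mathlib

section
/- Let X̃ = diag(x̃) and X = diag(x) for vectors x̃, x ∈ ℝⁿ with entries bounded: x_min ≤ xᵢ, x̃ᵢ ≤ x_max with x_min > 0. Let A be an m×n matrix such that AX̃²Aᵀ and AX²Aᵀ are invertible; set Σ̃ = (AX̃²Aᵀ)⁻¹, Σ = (AX²Aᵀ)⁻¹, and ΔΣ = Σ̃ − Σ. Then Tr(Σ⁻¹ ΔΣ Σ⁻¹ ΔΣ) ≥ (x_min⁴ λ_min²(AAᵀ) / (x_max⁸ λ_max⁴(AAᵀ))) · ‖A(X̃² − X²)Aᵀ‖²_HS. -/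
open Matrix MeasureTheory ProbabilityTheory Real

noncomputable def sNorm {m n : ℕ} (M : Matrix (Fin m) (Fin n) ℝ) : ℝ :=
  ‖LinearMap.toContinuousLinearMap (Matrix.toEuclideanLin M)‖

noncomputable def sMin {m n : ℕ} (M : Matrix (Fin m) (Fin n) ℝ) : ℝ :=
  sInf {r | ∃ x : EuclideanSpace ℝ (Fin n), ‖x‖ = 1 ∧ r = ‖Matrix.toEuclideanLin M x‖}

noncomputable def lamMax {n : ℕ} (M : Matrix (Fin n) (Fin n) ℝ) : ℝ :=
  sSup {μ : ℝ | Module.End.HasEigenvalue (Matrix.toEuclideanLin M) μ}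

noncomputable def lamMin {n : ℕ} (M : Matrix (Fin n) (Fin n) ℝ) : ℝ :=
  sInf {μ : ℝ | Module.End.HasEigenvalue (Matrix.toEuclideanLin M) μ}

noncomputable def frobSq {m n : ℕ} (M : Matrix (Fin m) (Fin n) ℝ) : ℝ :=
  ∑ i, ∑ j, (M i j)^2

/- ### Auxiliary lemmas -/

lemma aux_eigSet_finite {k : ℕ} (M : Matrix (Fin k) (Fin k) ℝ) :
    {μ : ℝ | Module.End.HasEigenvalue (Matrix.toEuclideanLin M) μ}.Finite :=
  Set.Finite.subset (Polynomial.finite_setOf_isRoot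
    (minpoly.ne_zero (IsIntegral.of_finite ℝ (Matrix.toEuclideanLin M))))
    (fun _ hμ => Module.End.hasEigenvalue_iff_isRoot.mp hμ)

lemma aux_eig_mem {k : ℕ} {M : Matrix (Fin k) (Fin k) ℝ} (hM : M.IsHermitian) (i : Fin k) :
    hM.eigenvalues i ∈ {μ : ℝ | Module.End.HasEigenvalue (Matrix.toEuclideanLin M) μ} :=
  LinearMap.IsSymmetric.hasEigenvalue_eigenvalues _ _ _

lemma aux_eig_le_lamMax {k : ℕ} {M : Matrix (Fin k) (Fin k) ℝ} (hM : M.IsHermitian) (i : Fin k) :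
    hM.eigenvalues i ≤ lamMax M :=
  le_csSup (aux_eigSet_finite M).bddAbove (aux_eig_mem hM i)

lemma aux_lamMin_le_eig {k : ℕ} {M : Matrix (Fin k) (Fin k) ℝ} (hM : M.IsHermitian) (i : Fin k) :
    lamMin M ≤ hM.eigenvalues i :=
  csInf_le (aux_eigSet_finite M).bddBelow (aux_eig_mem hM i)

lemma aux_eigval_nonneg_of_psd {k : ℕ} {M : Matrix (Fin k) (Fin k) ℝ} (hM : M.PosSemidef)
    {μ : ℝ} (hμ : Module.End.HasEigenvalue (Matrix.toEuclideanLin M) μ) : 0 ≤ μ := by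
  obtain ⟨v, hv⟩ := hμ.exists_hasEigenvector
  have hv1 : Matrix.toEuclideanLin M v = μ • v := hv.apply_eq_smul
  have hv2 : M *ᵥ (WithLp.equiv 2 (Fin k → ℝ) v) = μ • (WithLp.equiv 2 (Fin k → ℝ) v) := by
    have := congrArg (WithLp.equiv 2 (Fin k → ℝ)) hv1
    simpa [Matrix.toEuclideanLin_apply] using this
  set w : Fin k → ℝ := WithLp.equiv 2 (Fin k → ℝ) v with hw
  have hwne : w ≠ 0 := by
    simpa using fun h => hv.right ((WithLp.equiv 2 (Fin k → ℝ)).injective (by simpa [hw] using h))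
  have hq : 0 ≤ star w ⬝ᵥ (M *ᵥ w) := hM.dotProduct_mulVec_nonneg w
  rw [hv2] at hq
  have hpos : 0 < w ⬝ᵥ w := by
    obtain ⟨i, hi⟩ := Function.ne_iff.mp hwne
    have hi2 : w i ≠ 0 := by simpa using hi
    have : (0:ℝ) < w i * w i := mul_self_pos.mpr hi2
    exact Finset.sum_pos' (fun j _ => mul_self_nonneg _) ⟨i, Finset.mem_univ i, this⟩
  have heq : star w ⬝ᵥ (μ • w) = μ * (w ⬝ᵥ w) := by
    simp [dotProduct, Finset.mul_sum, mul_comm, mul_left_comm]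
  rw [heq] at hq
  exact nonneg_of_mul_nonneg_right (by linarith [hq]) hpos

lemma aux_quad_le_lamMax {k : ℕ} {M : Matrix (Fin k) (Fin k) ℝ} (hM : M.IsHermitian)
    (v : Fin k → ℝ) :
    v ⬝ᵥ (M *ᵥ v) ≤ lamMax M * (v ⬝ᵥ v) := by
  classical
  have hev : ∀ i, hM.eigenvalues i ≤ lamMax M := aux_eig_le_lamMax hM
  have hUst2 : (hM.eigenvectorUnitary : Matrix (Fin k) (Fin k) ℝ) *
      star (hM.eigenvectorUnitary : Matrix (Fin k) (Fin k) ℝ) = 1 :=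
    Unitary.coe_mul_star_self hM.eigenvectorUnitary
  have hspec : M = (hM.eigenvectorUnitary : Matrix (Fin k) (Fin k) ℝ) *
      diagonal hM.eigenvalues * star (hM.eigenvectorUnitary : Matrix (Fin k) (Fin k) ℝ) := by
    simpa using hM.spectral_theorem
  obtain ⟨U, hspec, hUst2⟩ : ∃ U : Matrix (Fin k) (Fin k) ℝ,
      M = U * diagonal hM.eigenvalues * star U ∧ U * star U = 1 := ⟨_, hspec, hUst2⟩
  set w : Fin k → ℝ := (star U) *ᵥ v with hwdef
  have hUw : U *ᵥ w = v := by
    rw [hwdef, mulVec_mulVec, hUst2, one_mulVec]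
  have hMv : M *ᵥ v = U *ᵥ (diagonal hM.eigenvalues *ᵥ ((star U) *ᵥ v)) := by
    conv_lhs => rw [hspec]
    rw [mulVec_mulVec, mulVec_mulVec]
  have hstarT : star U = Uᵀ := Matrix.conjTranspose_eq_transpose_of_trivial U
  have key : ∀ z : Fin k → ℝ, v ⬝ᵥ (U *ᵥ z) = w ⬝ᵥ z := by
    intro z
    rw [Matrix.dotProduct_mulVec, hwdef, ← Matrix.mulVec_transpose, hstarT]
  have h1 : v ⬝ᵥ (M *ᵥ v) = ∑ i, hM.eigenvalues i * (w i * w i) := by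
    rw [hMv, ← hwdef, key]
    simp [dotProduct, mulVec_diagonal, mul_comm, mul_left_comm, mul_assoc]
  have h2 : v ⬝ᵥ v = w ⬝ᵥ w := by
    calc v ⬝ᵥ v = v ⬝ᵥ (U *ᵥ w) := by rw [hUw]
      _ = w ⬝ᵥ w := key w
  rw [h1, h2]
  calc ∑ i, hM.eigenvalues i * (w i * w i) ≤ ∑ i, lamMax M * (w i * w i) :=
        Finset.sum_le_sum (fun i _ => mul_le_mul_of_nonneg_right (hev i) (mul_self_nonneg _))
    _ = lamMax M * (w ⬝ᵥ w) := by rw [dotProduct, Finset.mul_sum]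

lemma aux_psd_trace_nonneg {k : ℕ} {M : Matrix (Fin k) (Fin k) ℝ} (hM : M.PosSemidef) :
    0 ≤ M.trace := by
  rw [Matrix.trace]
  apply Finset.sum_nonneg
  intro i _
  have := hM.dotProduct_mulVec_nonneg (Pi.single i 1)
  simpa [dotProduct, Pi.single_apply, ite_mul] using this

lemma aux_trace_sq_eq_frobSq {k : ℕ} {M : Matrix (Fin k) (Fin k) ℝ} (hM : Mᵀ = M) :
    (M * M).trace = frobSq M := by
  rw [Matrix.trace, frobSq]
  congr 1; ext i
  rw [Matrix.diag, Matrix.mul_apply]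
  congr 1; ext j
  rw [pow_two]
  nth_rewrite 2 [← hM]
  rfl

open scoped MatrixOrder

lemma aux_trace_PMPM_ge {k : ℕ} {P M : Matrix (Fin k) (Fin k) ℝ} {c : ℝ} (hc : 0 ≤ c)
    (hM : Mᵀ = M) (hP : (P - c • 1).PosSemidef) :
    c^2 * frobSq M ≤ (P * M * P * M).trace := by
  classical
  set R := P - c • 1 with hR
  have hPe : P = c • 1 + R := by rw [hR]; abel
  have hMH : Mᴴ = M := by rw [Matrix.conjTranspose_eq_transpose_of_trivial, hM]
  have h1 : 0 ≤ (M * (R * M)).trace := by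
    have := hP.conjTranspose_mul_mul_same M
    rw [hMH] at this
    have := aux_psd_trace_nonneg this
    rwa [Matrix.mul_assoc] at this
  have h1' : 0 ≤ (R * M * M).trace := by
    rw [← Matrix.trace_mul_comm M (R * M)]
    exact h1
  set Q := CFC.sqrt R with hQdef
  have h2 : 0 ≤ (R * M * (R * M)).trace := by
    have hQQ : Q * Q = R := CFC.sqrt_mul_sqrt_self R hP.nonneg
    have hQH : Qᴴ = Q := (CFC.sqrt_nonneg R).posSemidef.isHermitian
    have hpsd := aux_psd_trace_nonneg (hP.conjTranspose_mul_mul_same (M * Q))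
    have heq : ((M * Q)ᴴ * R * (M * Q)).trace = (R * M * (R * M)).trace := by
      rw [Matrix.conjTranspose_mul, hQH, hMH]
      calc (Q * M * R * (M * Q)).trace
          = ((Q * M * R * M) * Q).trace := congrArg _ (by noncomm_ring)
        _ = (Q * (Q * M * R * M)).trace := Matrix.trace_mul_comm _ _
        _ = ((Q * Q) * M * (R * M)).trace := congrArg _ (by noncomm_ring)
        _ = (R * M * (R * M)).trace := by rw [hQQ]
    rwa [heq] at hpsd
  have hPM : P * M = c • M + R * M := by
    rw [hPe, Matrix.add_mul, Matrix.smul_mul, Matrix.one_mul]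
  have hexp : (P * M * P * M).trace
      = c^2 * (M * M).trace + c * (M * (R * M)).trace + c * (R * M * M).trace
        + (R * M * (R * M)).trace := by
    have hassoc : P * M * P * M = (P * M) * (P * M) := by noncomm_ring
    rw [hassoc, hPM]
    simp only [Matrix.add_mul, Matrix.mul_add, Matrix.trace_add, Matrix.smul_mul,
      Matrix.mul_smul, Matrix.trace_smul, smul_smul, smul_eq_mul, Matrix.mul_assoc]
    ring
  rw [hexp, aux_trace_sq_eq_frobSq hM]
  have hfrob : 0 ≤ frobSq M := Finset.sum_nonneg fun i _ =>
    Finset.sum_nonneg fun j _ => sq_nonneg _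
  nlinarith [mul_nonneg hc h1, mul_nonneg hc h1']

lemma aux_inv_quad_lower {k : ℕ} {T : Matrix (Fin k) (Fin k) ℝ} (hT : T.PosSemidef)
    (hdet : IsUnit T.det) {b : ℝ} (hb : 0 < b)
    (hub : ∀ v, v ⬝ᵥ (T *ᵥ v) ≤ b * (v ⬝ᵥ v)) :
    (T⁻¹ - (1/b) • (1 : Matrix (Fin k) (Fin k) ℝ)).PosSemidef := by
  classical
  set Q := CFC.sqrt T with hQdef
  have hQQ : Q * Q = T := CFC.sqrt_mul_sqrt_self T hT.nonneg
  have hQT : Qᵀ = Q := by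
    rw [← Matrix.conjTranspose_eq_transpose_of_trivial]
    exact (CFC.sqrt_nonneg T).posSemidef.isHermitian
  have key : ∀ u z : Fin k → ℝ, u ⬝ᵥ (Q *ᵥ z) = (Q *ᵥ u) ⬝ᵥ z := by
    intro u z
    rw [Matrix.dotProduct_mulVec, ← Matrix.mulVec_transpose, hQT]
  refine Matrix.PosSemidef.of_dotProduct_mulVec_nonneg ?_ ?_
  · refine (hT.isHermitian.inv).sub ?_
    show (_ : Matrix (Fin k) (Fin k) ℝ)ᴴ = _
    simp [Matrix.conjTranspose_smul]
  · intro v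
    have hstar : star v = v := by funext i; simp
    rw [hstar, Matrix.sub_mulVec, Matrix.smul_mulVec, Matrix.one_mulVec,
      dotProduct_sub, dotProduct_smul]
    set w : Fin k → ℝ := T⁻¹ *ᵥ v with hw
    have hTw : T *ᵥ w = v := by
      rw [hw, mulVec_mulVec, Matrix.mul_nonsing_inv _ hdet, one_mulVec]
    have hs : 0 ≤ v ⬝ᵥ v := Finset.sum_nonneg fun i _ => mul_self_nonneg _
    have ht0 : 0 ≤ v ⬝ᵥ w := by
      have : w ⬝ᵥ (T *ᵥ w) = v ⬝ᵥ w := by rw [hTw, dotProduct_comm]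
      rw [← this]
      have := hT.dotProduct_mulVec_nonneg w
      rwa [show star w = w from funext fun i => by simp] at this
    have hcs : (v ⬝ᵥ v)^2 ≤ (v ⬝ᵥ (T *ᵥ v)) * (v ⬝ᵥ w) := by
      have e1 : v ⬝ᵥ v = (Q *ᵥ v) ⬝ᵥ (Q *ᵥ w) := by
        rw [← hTw, ← hQQ, ← mulVec_mulVec, key]
      have e2 : (Q *ᵥ v) ⬝ᵥ (Q *ᵥ v) = v ⬝ᵥ (T *ᵥ v) := by
        rw [← key, mulVec_mulVec, hQQ]
      have e3 : (Q *ᵥ w) ⬝ᵥ (Q *ᵥ w) = v ⬝ᵥ w := by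
        rw [← key, mulVec_mulVec, hQQ, hTw, dotProduct_comm]
      calc (v ⬝ᵥ v)^2 = (∑ i, (Q *ᵥ v) i * (Q *ᵥ w) i)^2 := by rw [e1]; rfl
        _ ≤ (∑ i, ((Q *ᵥ v) i)^2) * (∑ i, ((Q *ᵥ w) i)^2) :=
            Finset.sum_mul_sq_le_sq_mul_sq _ _ _
        _ = (v ⬝ᵥ (T *ᵥ v)) * (v ⬝ᵥ w) := by
            rw [← e2, ← e3, dotProduct, dotProduct]
            simp [pow_two]
    have hub' := hub v
    have hfinal : (1/b) * (v ⬝ᵥ v) ≤ v ⬝ᵥ w := by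
      rcases eq_or_lt_of_le hs with hzero | hpos
      · rw [← hzero]; simpa using ht0
      · have h1 : (v ⬝ᵥ v)^2 ≤ b * (v ⬝ᵥ v) * (v ⬝ᵥ w) :=
          le_trans hcs (mul_le_mul_of_nonneg_right hub' ht0)
        rw [div_mul_eq_mul_div, one_mul, div_le_iff₀ hb]
        nlinarith
    simp only [smul_eq_mul]
    linarith [hfinal]

lemma aux_sandwich_sym {m n : ℕ} (A : Matrix (Fin m) (Fin n) ℝ) (d : Fin n → ℝ) :
    (A * Matrix.diagonal d ^ 2 * Aᵀ)ᵀ = A * Matrix.diagonal d ^ 2 * Aᵀ := by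
  rw [Matrix.diagonal_pow, Matrix.transpose_mul, Matrix.transpose_mul,
    Matrix.transpose_transpose, Matrix.diagonal_transpose, Matrix.mul_assoc]

/-- Lower bound for Tr(Σ⁻¹ ΔΣ Σ⁻¹ ΔΣ). -/
theorem stmt3 {m n : ℕ} (A : Matrix (Fin m) (Fin n) ℝ)
    (x xt : Fin n → ℝ) (xmin xmax : ℝ) (hxmin : 0 < xmin)
    (hx : ∀ i, x i ∈ Set.Icc xmin xmax) (hxt : ∀ i, xt i ∈ Set.Icc xmin xmax)
    (hX : IsUnit (A * (Matrix.diagonal x) ^ 2 * Aᵀ).det)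
    (hXt : IsUnit (A * (Matrix.diagonal xt) ^ 2 * Aᵀ).det) :
    Matrix.trace
      (((A * (Matrix.diagonal x) ^ 2 * Aᵀ)⁻¹)⁻¹ *
        ((A * (Matrix.diagonal xt) ^ 2 * Aᵀ)⁻¹ - (A * (Matrix.diagonal x) ^ 2 * Aᵀ)⁻¹) *
        ((A * (Matrix.diagonal x) ^ 2 * Aᵀ)⁻¹)⁻¹ *
        ((A * (Matrix.diagonal xt) ^ 2 * Aᵀ)⁻¹ - (A * (Matrix.diagonal x) ^ 2 * Aᵀ)⁻¹)) ≥
      (xmin ^ 4 * lamMin (A * Aᵀ) ^ 2 / (xmax ^ 8 * lamMax (A * Aᵀ) ^ 4)) *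
        frobSq (A * ((Matrix.diagonal xt) ^ 2 - (Matrix.diagonal x) ^ 2) * Aᵀ) := by
  classical
  rcases Nat.eq_zero_or_pos m with hm0 | hm
  · subst hm0
    simp [Matrix.trace, frobSq]
  rcases Nat.eq_zero_or_pos n with hn0 | hn
  · exfalso
    subst hn0
    have hz : A * (Matrix.diagonal x)^2 * Aᵀ = 0 := by
      ext i j; simp [Matrix.mul_apply]
    rw [hz] at hX
    rw [show det (0 : Matrix (Fin m) (Fin m) ℝ) = 0 from haveI : Nonempty (Fin m) := ⟨⟨0, hm⟩⟩; Matrix.det_zero] at hX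
    simp at hX
  rw [Matrix.nonsing_inv_nonsing_inv _ hX]
  set S := A * (Matrix.diagonal x)^2 * Aᵀ with hSdef
  set T := A * (Matrix.diagonal xt)^2 * Aᵀ with hTdef
  have hMrhs : A * ((Matrix.diagonal xt)^2 - (Matrix.diagonal x)^2) * Aᵀ = T - S := by
    rw [hSdef, hTdef, Matrix.mul_sub, Matrix.sub_mul]
  rw [hMrhs]
  -- trace reduction
  have hE' : T⁻¹ - S⁻¹ = -(T⁻¹ * (T - S) * S⁻¹) := by
    rw [Matrix.mul_sub, Matrix.nonsing_inv_mul _ hXt, Matrix.sub_mul, Matrix.one_mul,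
      Matrix.mul_assoc, Matrix.mul_nonsing_inv _ hX, Matrix.mul_one, neg_sub]
  have htr : (S * (T⁻¹ - S⁻¹) * S * (T⁻¹ - S⁻¹)).trace
      = (T⁻¹ * (T - S) * T⁻¹ * (T - S)).trace := by
    rw [hE']
    have h1 : S * -(T⁻¹*(T-S)*S⁻¹) * S * -(T⁻¹*(T-S)*S⁻¹)
        = S * (T⁻¹*(T-S)) * (S⁻¹*S) * (T⁻¹*(T-S)) * S⁻¹ := by noncomm_ring
    rw [h1, Matrix.nonsing_inv_mul _ hX, Matrix.mul_one, Matrix.trace_mul_comm]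
    have h2 : S⁻¹ * (S * (T⁻¹*(T-S)) * (T⁻¹*(T-S)))
        = (S⁻¹*S) * ((T⁻¹*(T-S)) * (T⁻¹*(T-S))) := by noncomm_ring
    rw [h2, Matrix.nonsing_inv_mul _ hX, Matrix.one_mul]
    exact congrArg Matrix.trace (by noncomm_ring)
  rw [ge_iff_le, htr]
  -- scalar facts
  have hxmx : xmin ≤ xmax := le_trans (hx ⟨0, hn⟩).1 (hx ⟨0, hn⟩).2
  have hxmaxpos : 0 < xmax := lt_of_lt_of_le hxmin hxmx
  have hATH : (A * Aᵀ).IsHermitian := by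
    rw [← Matrix.conjTranspose_eq_transpose_of_trivial]
    exact Matrix.isHermitian_mul_conjTranspose_self A
  have hAApsd : (A * Aᵀ).PosSemidef := by
    have := Matrix.posSemidef_self_mul_conjTranspose A
    rwa [Matrix.conjTranspose_eq_transpose_of_trivial] at this
  have hTpsd : T.PosSemidef := by
    rw [hTdef, Matrix.diagonal_pow]
    have hd : (Matrix.diagonal (xt^2)).PosSemidef :=
      Matrix.posSemidef_diagonal_iff.mpr (fun i => sq_nonneg (xt i))
    have := hd.mul_mul_conjTranspose_same A
    rwa [Matrix.conjTranspose_eq_transpose_of_trivial] at this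
  have hquadAA : ∀ v : Fin m → ℝ, v ⬝ᵥ ((A * Aᵀ) *ᵥ v) = (Aᵀ *ᵥ v) ⬝ᵥ (Aᵀ *ᵥ v) := by
    intro v
    rw [← mulVec_mulVec, Matrix.dotProduct_mulVec, ← Matrix.mulVec_transpose]
  have hTker : ∀ z : Fin m → ℝ, T *ᵥ z = 0 → z = 0 := by
    intro z hz
    have h1 : T⁻¹ *ᵥ (T *ᵥ z) = z := by
      rw [mulVec_mulVec, Matrix.nonsing_inv_mul _ hXt, one_mulVec]
    rw [hz, Matrix.mulVec_zero] at h1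
    exact h1.symm
  have hlmaxpos : 0 < lamMax (A * Aᵀ) := by
    set v0 : Fin m → ℝ := Pi.single ⟨0, hm⟩ 1 with hv0
    have hu : Aᵀ *ᵥ v0 ≠ 0 := by
      intro h
      have hTz : T *ᵥ v0 = 0 := by
        rw [hTdef, ← mulVec_mulVec, ← mulVec_mulVec, h, Matrix.mulVec_zero, Matrix.mulVec_zero]
      have := congrFun (hTker v0 hTz) ⟨0, hm⟩
      simp [hv0] at this
    have hpos : 0 < (Aᵀ *ᵥ v0) ⬝ᵥ (Aᵀ *ᵥ v0) := by
      obtain ⟨i, hi⟩ := Function.ne_iff.mp hu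
      have hi2 : (Aᵀ *ᵥ v0) i ≠ 0 := by simpa using hi
      exact Finset.sum_pos' (fun j _ => mul_self_nonneg _)
        ⟨i, Finset.mem_univ i, mul_self_pos.mpr hi2⟩
    have hone : v0 ⬝ᵥ v0 = 1 := by
      simp [hv0, dotProduct, Pi.single_apply]
    have := aux_quad_le_lamMax hATH v0
    rw [hquadAA, hone, mul_one] at this
    linarith
  have hub : ∀ v : Fin m → ℝ, v ⬝ᵥ (T *ᵥ v) ≤ (xmax^2 * lamMax (A * Aᵀ)) * (v ⬝ᵥ v) := by
    intro v
    have e : v ⬝ᵥ (T *ᵥ v) = (Aᵀ *ᵥ v) ⬝ᵥ (Matrix.diagonal (xt^2) *ᵥ (Aᵀ *ᵥ v)) := by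
      rw [hTdef, Matrix.diagonal_pow, ← mulVec_mulVec, ← mulVec_mulVec,
        Matrix.dotProduct_mulVec, ← Matrix.mulVec_transpose]
    set u : Fin n → ℝ := Aᵀ *ᵥ v with hudef
    have e2 : u ⬝ᵥ (Matrix.diagonal (xt^2) *ᵥ u) = ∑ i, (xt i)^2 * (u i * u i) := by
      simp [dotProduct, Matrix.mulVec_diagonal, mul_comm, mul_left_comm, mul_assoc]
    have e3 : ∑ i, (xt i)^2 * (u i * u i) ≤ ∑ i, xmax^2 * (u i * u i) := by
      apply Finset.sum_le_sum
      intro i _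
      apply mul_le_mul_of_nonneg_right _ (mul_self_nonneg _)
      exact pow_le_pow_left₀ (le_of_lt (lt_of_lt_of_le hxmin (hxt i).1)) (hxt i).2 2
    have e4 : ∑ i, xmax^2 * (u i * u i) = xmax^2 * (u ⬝ᵥ u) := by
      rw [dotProduct, Finset.mul_sum]
    have e5 : u ⬝ᵥ u ≤ lamMax (A * Aᵀ) * (v ⬝ᵥ v) := by
      rw [hudef, ← hquadAA]
      exact aux_quad_le_lamMax hATH v
    have hx2 : (0:ℝ) ≤ xmax^2 := sq_nonneg _
    calc v ⬝ᵥ (T *ᵥ v) = u ⬝ᵥ (Matrix.diagonal (xt^2) *ᵥ u) := e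
      _ = ∑ i, (xt i)^2 * (u i * u i) := e2
      _ ≤ ∑ i, xmax^2 * (u i * u i) := e3
      _ = xmax^2 * (u ⬝ᵥ u) := e4
      _ ≤ xmax^2 * (lamMax (A * Aᵀ) * (v ⬝ᵥ v)) := mul_le_mul_of_nonneg_left e5 hx2
      _ = (xmax^2 * lamMax (A * Aᵀ)) * (v ⬝ᵥ v) := by ring
  have hb : (0:ℝ) < xmax^2 * lamMax (A * Aᵀ) := mul_pos (pow_pos hxmaxpos 2) hlmaxpos
  have hMmT : (T - S)ᵀ = T - S := by
    rw [Matrix.transpose_sub, hTdef, hSdef, aux_sandwich_sym, aux_sandwich_sym]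
  have hP : (T⁻¹ - (1/(xmax^2 * lamMax (A * Aᵀ))) • (1 : Matrix (Fin m) (Fin m) ℝ)).PosSemidef :=
    aux_inv_quad_lower hTpsd hXt hb hub
  have hkey : (1/(xmax^2 * lamMax (A * Aᵀ)))^2 * frobSq (T - S)
      ≤ (T⁻¹ * (T - S) * T⁻¹ * (T - S)).trace :=
    aux_trace_PMPM_ge (one_div_nonneg.mpr hb.le) hMmT hP
  have hfrobnn : 0 ≤ frobSq (T - S) := Finset.sum_nonneg fun i _ =>
    Finset.sum_nonneg fun j _ => sq_nonneg _
  -- lamMin facts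
  have hlmin0 : 0 ≤ lamMin (A * Aᵀ) :=
    le_csInf ⟨_, aux_eig_mem hATH ⟨0, hm⟩⟩ (fun μ hμ => aux_eigval_nonneg_of_psd hAApsd hμ)
  have hminmax : lamMin (A * Aᵀ) ≤ lamMax (A * Aᵀ) :=
    le_trans (aux_lamMin_le_eig hATH ⟨0, hm⟩) (aux_eig_le_lamMax hATH ⟨0, hm⟩)
  have hC : xmin ^ 4 * lamMin (A * Aᵀ) ^ 2 / (xmax ^ 8 * lamMax (A * Aᵀ) ^ 4)
      ≤ (1/(xmax^2 * lamMax (A * Aᵀ)))^2 := by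
    have hden1 : (0:ℝ) < xmax ^ 8 * lamMax (A * Aᵀ) ^ 4 :=
      mul_pos (pow_pos hxmaxpos 8) (pow_pos hlmaxpos 4)
    have hden2 : (0:ℝ) < (xmax^2 * lamMax (A * Aᵀ))^2 := pow_pos hb 2
    rw [div_pow, one_pow, div_le_div_iff₀ hden1 hden2]
    have key2 : xmin^4 * lamMin (A * Aᵀ)^2 ≤ xmax^4 * lamMax (A * Aᵀ)^2 :=
      mul_le_mul (pow_le_pow_left₀ hxmin.le hxmx 4) (pow_le_pow_left₀ hlmin0 hminmax 2)
        (pow_nonneg hlmin0 2) (pow_nonneg hxmaxpos.le 4)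
    have hnn : (0:ℝ) ≤ xmax^4 * lamMax (A * Aᵀ)^2 :=
      mul_nonneg (pow_nonneg hxmaxpos.le 4) (pow_nonneg (le_trans hlmin0 hminmax) 2)
    nlinarith [mul_le_mul_of_nonneg_right key2 hnn]
  calc xmin ^ 4 * lamMin (A * Aᵀ) ^ 2 / (xmax ^ 8 * lamMax (A * Aᵀ) ^ 4) * frobSq (T - S)
      ≤ (1/(xmax^2 * lamMax (A * Aᵀ)))^2 * frobSq (T - S) :=
        mul_le_mul_of_nonneg_right hC hfrobnn
    _ ≤ (T⁻¹ * (T - S) * T⁻¹ * (T - S)).trace := hkey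
end

section
/- Under the same hypotheses, Tr(Σ⁻¹ ΔΣ Σ⁻¹ ΔΣ) ≤ (x_max⁴ λ_max²(AAᵀ) / (x_min⁸ λ_min⁴(AAᵀ))) · ‖A(X̃² − X²)Aᵀ‖²_HS. -/
open Matrix MeasureTheory ProbabilityTheory Real

section Helpers

lemma frobSq_nonneg' {m n : ℕ} (M : Matrix (Fin m) (Fin n) ℝ) : 0 ≤ frobSq M :=
  Finset.sum_nonneg fun _ _ => Finset.sum_nonneg fun _ _ => sq_nonneg _

lemma frobSq_neg' {m n : ℕ} (M : Matrix (Fin m) (Fin n) ℝ) : frobSq (-M) = frobSq M := by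
  simp [frobSq]

lemma trace_sq_le_frobSq' {k : ℕ} (M : Matrix (Fin k) (Fin k) ℝ) :
    Matrix.trace (M * M) ≤ frobSq M := by
  have h1 : Matrix.trace (M * M) = ∑ p : Fin k × Fin k, M p.1 p.2 * M p.2 p.1 := by
    rw [Matrix.trace, Fintype.sum_prod_type]
    simp [Matrix.diag, Matrix.mul_apply]
  have h2 : (∑ p : Fin k × Fin k, M p.1 p.2 * M p.2 p.1)^2 ≤
      (∑ p : Fin k × Fin k, (M p.1 p.2)^2) * (∑ p : Fin k × Fin k, (M p.2 p.1)^2) :=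
    Finset.sum_mul_sq_le_sq_mul_sq _ _ _
  have h3 : (∑ p : Fin k × Fin k, (M p.1 p.2)^2) = frobSq M := by
    rw [Fintype.sum_prod_type]; rfl
  have h4 : (∑ p : Fin k × Fin k, (M p.2 p.1)^2) = frobSq M := by
    rw [Fintype.sum_prod_type, frobSq, Finset.sum_comm]
  rw [h1]
  have hF : 0 ≤ frobSq M := frobSq_nonneg' M
  nlinarith [h2, h3, h4]

lemma dot_sandwich' {m n : ℕ} (A : Matrix (Fin m) (Fin n) ℝ) (f : Fin n → ℝ) (v : Fin m → ℝ) :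
    v ⬝ᵥ ((A * Matrix.diagonal f * Aᵀ) *ᵥ v) = ∑ i, f i * ((Aᵀ *ᵥ v) i)^2 := by
  rw [← Matrix.mulVec_mulVec, ← Matrix.mulVec_mulVec, Matrix.dotProduct_mulVec v A,
    ← Matrix.mulVec_transpose]
  simp only [dotProduct, Matrix.mulVec_diagonal]
  exact Finset.sum_congr rfl (fun i _ => by ring)

lemma dot_cs' {k : ℕ} (w v : Fin k → ℝ) : (w ⬝ᵥ v)^2 ≤ (w ⬝ᵥ w) * (v ⬝ᵥ v) := by
  have := Finset.sum_mul_sq_le_sq_mul_sq Finset.univ w v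
  simp only [dotProduct]
  calc (∑ i, w i * v i)^2 ≤ (∑ i, (w i)^2) * (∑ i, (v i)^2) := this
    _ = (∑ i, w i * w i) * (∑ i, v i * v i) := by simp [pow_two]

lemma dot_self_nonneg' {k : ℕ} (v : Fin k → ℝ) : 0 ≤ v ⬝ᵥ v :=
  Finset.sum_nonneg fun _ _ => mul_self_nonneg _

lemma inv_vec_bound' {k : ℕ} {P : Matrix (Fin k) (Fin k) ℝ} (hdet : IsUnit P.det)
    {c : ℝ} (hc : 0 < c) (hq : ∀ v, c * (v ⬝ᵥ v) ≤ v ⬝ᵥ (P *ᵥ v)) (v : Fin k → ℝ) :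
    (P⁻¹ *ᵥ v) ⬝ᵥ (P⁻¹ *ᵥ v) ≤ (1/c^2) * (v ⬝ᵥ v) := by
  set w := P⁻¹ *ᵥ v with hw
  have hPw : P *ᵥ w = v := by
    rw [hw, Matrix.mulVec_mulVec, Matrix.mul_nonsing_inv _ hdet, Matrix.one_mulVec]
  have h1 : c * (w ⬝ᵥ w) ≤ w ⬝ᵥ v := by simpa [hPw] using hq w
  have hcs := dot_cs' w v
  have hww := dot_self_nonneg' w
  have hvv := dot_self_nonneg' v
  have h2 : (c * (w ⬝ᵥ w))^2 ≤ (w ⬝ᵥ v)^2 := by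
    apply pow_le_pow_left₀ (by positivity) h1
  have hc2 : (0:ℝ) < c^2 := by positivity
  rcases eq_or_lt_of_le hww with h0 | h0
  · rw [← h0]; positivity
  · have key : c^2 * (w ⬝ᵥ w) ≤ v ⬝ᵥ v := by nlinarith [h2, hcs, h0]
    rw [← mul_le_mul_iff_right₀ hc2]
    have he : c^2 * (1/c^2 * (v ⬝ᵥ v)) = v ⬝ᵥ v := by field_simp
    rw [he]; exact key

lemma frobSq_mul_le' {k : ℕ} {B D : Matrix (Fin k) (Fin k) ℝ} {c2 : ℝ}
    (hB : ∀ v, (B *ᵥ v) ⬝ᵥ (B *ᵥ v) ≤ c2 * (v ⬝ᵥ v)) :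
    frobSq (B * D) ≤ c2 * frobSq D := by
  rw [frobSq, frobSq, Finset.sum_comm]
  have step : ∀ j : Fin k, (∑ i, ((B * D) i j)^2) ≤ c2 * ∑ i, (D i j)^2 := by
    intro j
    have h := hB (fun i => D i j)
    have hl : (B *ᵥ fun i => D i j) ⬝ᵥ (B *ᵥ fun i => D i j) = ∑ i, ((B * D) i j)^2 := by
      simp only [dotProduct, Matrix.mulVec, Matrix.mul_apply, dotProduct, pow_two]
    have hr : ((fun i => D i j) ⬝ᵥ fun i => D i j) = ∑ i, (D i j)^2 := by
      simp [dotProduct, pow_two]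
    rw [hl, hr] at h
    exact h
  calc ∑ j, ∑ i, ((B * D) i j)^2 ≤ ∑ j, c2 * ∑ i, (D i j)^2 :=
        Finset.sum_le_sum (fun j _ => step j)
    _ = c2 * ∑ i, ∑ j, (D i j)^2 := by rw [← Finset.mul_sum, Finset.sum_comm]

lemma hasEig' {k : ℕ} {G : Matrix (Fin k) (Fin k) ℝ} (hG : G.IsHermitian) (i : Fin k) :
    Module.End.HasEigenvalue (Matrix.toEuclideanLin G) (hG.eigenvalues i) := by
  apply Module.End.hasEigenvalue_of_hasEigenvector (x := hG.eigenvectorBasis i)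
  constructor
  · rw [Module.End.mem_eigenspace_iff]
    have h := hG.mulVec_eigenvectorBasis i
    apply (WithLp.equiv 2 (Fin k → ℝ)).injective
    simpa [Matrix.toEuclideanLin_apply] using h
  · exact hG.eigenvectorBasis.orthonormal.ne_zero i

lemma eig_pos' {k : ℕ} {G : Matrix (Fin k) (Fin k) ℝ} (hG : G.PosDef) {μ : ℝ}
    (h : Module.End.HasEigenvalue (Matrix.toEuclideanLin G) μ) : 0 < μ := by
  obtain ⟨v, hv⟩ := h.exists_hasEigenvector
  set v' : Fin k → ℝ := WithLp.equiv 2 (Fin k → ℝ) v with hv'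
  have hGv : G *ᵥ v' = μ • v' := by
    have h2 := hv.apply_eq_smul
    simpa [Matrix.toEuclideanLin_apply, hv'] using congrArg (WithLp.equiv 2 (Fin k → ℝ)) h2
  have hv'0 : v' ≠ 0 := by
    intro h0
    exact hv.2 ((WithLp.equiv 2 (Fin k → ℝ)).injective (by simpa [hv'] using h0))
  have hpos := hG.dotProduct_mulVec_pos hv'0
  rw [hGv] at hpos
  have hstar : star v' = v' := by funext i; simp
  rw [hstar] at hpos
  have hdot : v' ⬝ᵥ (μ • v') = μ * (v' ⬝ᵥ v') := by
    simp [dotProduct, Finset.mul_sum]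
    exact Finset.sum_congr rfl (fun i _ => by ring)
  rw [hdot] at hpos
  have hnn : (0:ℝ) ≤ v' ⬝ᵥ v' := Finset.sum_nonneg fun i _ => mul_self_nonneg _
  nlinarith [hpos, hnn]

lemma quad_lower' {k : ℕ} {G : Matrix (Fin k) (Fin k) ℝ} (hG : G.IsHermitian)
    {L : ℝ} (hL : ∀ i, L ≤ hG.eigenvalues i) (v : Fin k → ℝ) :
    L * (v ⬝ᵥ v) ≤ v ⬝ᵥ (G *ᵥ v) := by
  set U : Matrix (Fin k) (Fin k) ℝ := (hG.eigenvectorUnitary : Matrix (Fin k) (Fin k) ℝ) with hU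
  set w : Fin k → ℝ := star U *ᵥ v with hwdef
  have hUU : U * star U = 1 := Matrix.mem_unitaryGroup_iff.mp hG.eigenvectorUnitary.2
  have hdot : ∀ z : Fin k → ℝ, v ⬝ᵥ (U *ᵥ z) = w ⬝ᵥ z := by
    intro z
    rw [Matrix.dotProduct_mulVec]
    congr 1
    rw [hwdef, show (star U : Matrix (Fin k) (Fin k) ℝ) = Uᵀ from
      Matrix.conjTranspose_eq_transpose_of_trivial U, Matrix.mulVec_transpose]
  have h1 : v ⬝ᵥ (G *ᵥ v) = ∑ i, hG.eigenvalues i * (w i)^2 := by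
    conv_lhs => rw [hG.spectral_theorem, Unitary.conjStarAlgAut_apply]
    rw [← Matrix.mulVec_mulVec, ← Matrix.mulVec_mulVec, hdot]
    simp only [dotProduct, Matrix.mulVec_diagonal, Function.comp_apply,
      RCLike.ofReal_real_eq_id, id_eq]
    exact Finset.sum_congr rfl (fun i _ => by ring)
  have h2 : v ⬝ᵥ v = ∑ i, (w i)^2 := by
    have := hdot w
    rw [hwdef, Matrix.mulVec_mulVec, hUU, Matrix.one_mulVec, ← hwdef] at this
    rw [this]
    simp [dotProduct, pow_two]
  rw [h1, h2, Finset.mul_sum]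
  exact Finset.sum_le_sum (fun i _ => mul_le_mul_of_nonneg_right (hL i) (sq_nonneg _))

end Helpers

/-- Upper bound for Tr(Σ⁻¹ ΔΣ Σ⁻¹ ΔΣ). -/
theorem stmt4 {m n : ℕ} (A : Matrix (Fin m) (Fin n) ℝ)
    (x xt : Fin n → ℝ) (xmin xmax : ℝ) (hxmin : 0 < xmin)
    (hx : ∀ i, x i ∈ Set.Icc xmin xmax) (hxt : ∀ i, xt i ∈ Set.Icc xmin xmax)
    (hAA : (A * Aᵀ).PosDef)
    (hX : IsUnit (A * (Matrix.diagonal x) ^ 2 * Aᵀ).det)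
    (hXt : IsUnit (A * (Matrix.diagonal xt) ^ 2 * Aᵀ).det) :
    Matrix.trace
      (((A * (Matrix.diagonal x) ^ 2 * Aᵀ)⁻¹)⁻¹ *
        ((A * (Matrix.diagonal xt) ^ 2 * Aᵀ)⁻¹ - (A * (Matrix.diagonal x) ^ 2 * Aᵀ)⁻¹) *
        ((A * (Matrix.diagonal x) ^ 2 * Aᵀ)⁻¹)⁻¹ *
        ((A * (Matrix.diagonal xt) ^ 2 * Aᵀ)⁻¹ - (A * (Matrix.diagonal x) ^ 2 * Aᵀ)⁻¹)) ≤
      (xmax ^ 4 * lamMax (A * Aᵀ) ^ 2 / (xmin ^ 8 * lamMin (A * Aᵀ) ^ 4)) *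
        frobSq (A * ((Matrix.diagonal xt) ^ 2 - (Matrix.diagonal x) ^ 2) * Aᵀ) := by
  rcases Nat.eq_zero_or_pos m with hm | hm
  · subst hm
    simp [Matrix.trace, frobSq]
  rcases Nat.eq_zero_or_pos n with hn0 | hn
  · exfalso
    have hzero : A * Aᵀ = 0 := by
      subst hn0
      ext i j
      simp [Matrix.mul_apply]
    have hne : (Pi.single (⟨0, hm⟩ : Fin m) (1:ℝ) : Fin m → ℝ) ≠ 0 := by
      intro h
      have := congrFun h ⟨0, hm⟩
      simp at this
    have h1 := hAA.dotProduct_mulVec_pos hne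
    rw [hzero] at h1
    simp at h1
  have hxmax : xmin ≤ xmax := le_trans (hx ⟨0, hn⟩).1 (hx ⟨0, hn⟩).2
  set G := A * Aᵀ with hGdef
  have hherm : G.IsHermitian := hAA.1
  set E := {μ : ℝ | Module.End.HasEigenvalue (Matrix.toEuclideanLin G) μ} with hE
  have hmemE : ∀ i, hherm.eigenvalues i ∈ E := fun i => hasEig' hherm i
  have hEfin : E.Finite :=
    Set.Finite.subset (Module.End.finite_spectrum (Matrix.toEuclideanLin G))
      (fun μ hμ => Module.End.hasEigenvalue_iff_mem_spectrum.mp hμ)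
  have hEne : E.Nonempty := ⟨_, hmemE ⟨0, hm⟩⟩
  have hLmem : lamMin G ∈ E := hEne.csInf_mem hEfin
  have hUmem : lamMax G ∈ E := hEne.csSup_mem hEfin
  have hLpos : 0 < lamMin G := eig_pos' hAA hLmem
  have hLle : ∀ μ ∈ E, lamMin G ≤ μ := fun μ h => csInf_le hEfin.bddBelow h
  have hLU : lamMin G ≤ lamMax G := hLle _ hUmem
  have hLeig : ∀ i, lamMin G ≤ hherm.eigenvalues i := fun i => hLle _ (hmemE i)
  set L := lamMin G with hLdef
  set Umax := lamMax G with hUdef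
  have hGquad : ∀ v, L * (v ⬝ᵥ v) ≤ v ⬝ᵥ (G *ᵥ v) := quad_lower' hherm hLeig
  set S := A * (Matrix.diagonal x) ^ 2 * Aᵀ with hSdef
  set St := A * (Matrix.diagonal xt) ^ 2 * Aᵀ with hStdef
  set c := xmin^2 * L with hcdef
  have hcpos : 0 < c := by positivity
  -- quadratic lower bound for St
  have hStquad : ∀ v, c * (v ⬝ᵥ v) ≤ v ⬝ᵥ (St *ᵥ v) := by
    intro v
    have h1 : v ⬝ᵥ (St *ᵥ v) = ∑ i, (xt i)^2 * ((Aᵀ *ᵥ v) i)^2 := by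
      rw [hStdef, Matrix.diagonal_pow, dot_sandwich']
      exact Finset.sum_congr rfl (fun i _ => by simp [pow_two])
    have h2 : v ⬝ᵥ (G *ᵥ v) = ∑ i, ((Aᵀ *ᵥ v) i)^2 := by
      have : G = A * Matrix.diagonal (fun _ : Fin n => (1:ℝ)) * Aᵀ := by
        rw [hGdef, Matrix.diagonal_one, Matrix.mul_one]
      rw [this, dot_sandwich']
      simp
    have h3 : xmin^2 * (∑ i, ((Aᵀ *ᵥ v) i)^2) ≤ ∑ i, (xt i)^2 * ((Aᵀ *ᵥ v) i)^2 := by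
      rw [Finset.mul_sum]
      apply Finset.sum_le_sum
      intro i _
      apply mul_le_mul_of_nonneg_right _ (sq_nonneg _)
      exact pow_le_pow_left₀ hxmin.le (hxt i).1 2
    calc c * (v ⬝ᵥ v) = xmin^2 * (L * (v ⬝ᵥ v)) := by rw [hcdef]; ring
      _ ≤ xmin^2 * (v ⬝ᵥ (G *ᵥ v)) :=
          mul_le_mul_of_nonneg_left (hGquad v) (by positivity)
      _ = xmin^2 * (∑ i, ((Aᵀ *ᵥ v) i)^2) := by rw [h2]
      _ ≤ ∑ i, (xt i)^2 * ((Aᵀ *ᵥ v) i)^2 := h3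
      _ = v ⬝ᵥ (St *ᵥ v) := h1.symm
  -- algebraic reduction of the trace
  rw [Matrix.nonsing_inv_nonsing_inv S hX]
  set D := S - St with hD
  have hΔ : St⁻¹ - S⁻¹ = St⁻¹ * D * S⁻¹ := by
    rw [hD, Matrix.mul_sub, Matrix.nonsing_inv_mul St hXt, Matrix.sub_mul, one_mul,
      Matrix.mul_assoc St⁻¹ S S⁻¹, Matrix.mul_nonsing_inv S hX, Matrix.mul_one]
  rw [hΔ]
  set M := St⁻¹ * D with hM
  have hre : S * (St⁻¹ * D * S⁻¹) * S * (St⁻¹ * D * S⁻¹) = S * (M * M * S⁻¹) := by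
    rw [hM]
    have hcan : S⁻¹ * (S * (St⁻¹ * (D * S⁻¹))) = St⁻¹ * (D * S⁻¹) := by
      rw [← Matrix.mul_assoc S⁻¹ S, Matrix.nonsing_inv_mul S hX, Matrix.one_mul]
    simp only [Matrix.mul_assoc, hcan]
  rw [hre]
  have htr : Matrix.trace (S * (M * M * S⁻¹)) = Matrix.trace (M * M) := by
    rw [Matrix.trace_mul_comm, Matrix.mul_assoc, Matrix.nonsing_inv_mul S hX, Matrix.mul_one]
  rw [htr]
  -- Frobenius norm of D equals that of the target matrix
  set T := A * ((Matrix.diagonal xt) ^ 2 - (Matrix.diagonal x) ^ 2) * Aᵀ with hT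
  have hTD : T = St - S := by
    rw [hT, Matrix.mul_sub, Matrix.sub_mul, hSdef, hStdef]
  have hfrobDT : frobSq D = frobSq T := by
    rw [hD, show S - St = -(St - S) from (neg_sub St S).symm, ← hTD, frobSq_neg']
  -- main chain
  have hbound := frobSq_mul_le' (D := D) (inv_vec_bound' hXt hcpos hStquad)
  have hkey : 1/c^2 ≤ xmax^4 * Umax^2 / (xmin^8 * L^4) := by
    have h1 : xmin^4 ≤ xmax^4 := pow_le_pow_left₀ hxmin.le hxmax 4
    have h2 : L^2 ≤ Umax^2 := pow_le_pow_left₀ hLpos.le hLU 2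
    have h3 : xmin^4 * L^2 ≤ xmax^4 * Umax^2 :=
      mul_le_mul h1 h2 (by positivity) (by positivity)
    rw [hcdef, div_le_div_iff₀ (by positivity) (by positivity), one_mul]
    nlinarith [h3, mul_le_mul_of_nonneg_right h3 (show (0:ℝ) ≤ xmin^4 * L^2 by positivity)]
  calc Matrix.trace (M * M) ≤ frobSq M := trace_sq_le_frobSq' M
    _ ≤ (1/c^2) * frobSq D := hbound
    _ = (1/c^2) * frobSq T := by rw [hfrobDT]
    _ ≤ (xmax^4 * Umax^2 / (xmin^8 * L^4)) * frobSq T :=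
        mul_le_mul_of_nonneg_right hkey (frobSq_nonneg' T)
end

section
/- Let Σ̃ = (AX̃²Aᵀ)⁻¹ and Σ̂ = (AX̂²Aᵀ)⁻¹ with X̃ = diag(x̃), X̂ = diag(x̂), all entries of x̃ and x̂ in [x_min, x_max] with x_min > 0, and AAᵀ positive definite. Then every eigenvalue λ of Σ̃^{−1/2} (Σ̃ − Σ̂) Σ̃^{−1/2} satisfies |λ| ≤ x_max² λ_max²(AAᵀ) ‖x̂² − x̃²‖_∞ / (x_min⁴ λ_min²(AAᵀ)), where x̂² and x̃² denote entrywise squares. -/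
open Matrix MeasureTheory ProbabilityTheory Real

private lemma aux_quad {m n : ℕ} (A : Matrix (Fin m) (Fin n) ℝ) (d : Fin n → ℝ)
    (x y : Fin m → ℝ) :
    x ⬝ᵥ ((A * Matrix.diagonal d * Aᵀ) *ᵥ y) = ∑ i, d i * ((Aᵀ *ᵥ x) i * (Aᵀ *ᵥ y) i) := by
  rw [← Matrix.mulVec_mulVec, ← Matrix.mulVec_mulVec, Matrix.dotProduct_mulVec,
    ← Matrix.mulVec_transpose]
  simp only [dotProduct, Matrix.mulVec_diagonal]
  exact Finset.sum_congr rfl fun i _ => by ring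

private lemma aux_cs {n : ℕ} (f g : Fin n → ℝ) :
    ∑ i, |f i| * |g i| ≤ Real.sqrt (∑ i, (f i)^2) * Real.sqrt (∑ i, (g i)^2) := by
  rw [← Real.sqrt_mul (by positivity)]
  rw [show (∑ i, (f i)^2) = ∑ i, |f i|^2 by simp [sq_abs],
      show (∑ i, (g i)^2) = ∑ i, |g i|^2 by simp [sq_abs]]
  exact Real.le_sqrt_of_sq_le (Finset.sum_mul_sq_le_sq_mul_sq _ _ _)

private lemma aux_eigvec {m : ℕ} (M : Matrix (Fin m) (Fin m) ℝ) (μ : ℝ)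
    (hμ : Module.End.HasEigenvalue (Matrix.toEuclideanLin M) μ) :
    ∃ v0 : Fin m → ℝ, v0 ≠ 0 ∧ M *ᵥ v0 = μ • v0 := by
  obtain ⟨v, hv⟩ := hμ.exists_hasEigenvector
  refine ⟨(WithLp.equiv 2 (Fin m → ℝ)) v, ?_, ?_⟩
  · simpa using (WithLp.equiv 2 (Fin m → ℝ)).injective.ne hv.2
  · have := congrArg (WithLp.equiv 2 (Fin m → ℝ)) hv.apply_eq_smul
    simpa using this

private lemma aux_dotself_pos {m : ℕ} (v : Fin m → ℝ) (hv : v ≠ 0) : 0 < v ⬝ᵥ v := by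
  obtain ⟨j, hj⟩ := Function.ne_iff.1 hv
  simp only [dotProduct]
  refine Finset.sum_pos' (fun i _ => mul_self_nonneg _) ⟨j, Finset.mem_univ j, ?_⟩
  exact mul_self_pos.2 hj

private lemma aux_eig_finite {m : ℕ} (M : Matrix (Fin m) (Fin m) ℝ) :
    {μ : ℝ | Module.End.HasEigenvalue (Matrix.toEuclideanLin M) μ}.Finite := by
  have hsub : {μ : ℝ | Module.End.HasEigenvalue (Matrix.toEuclideanLin M) μ}
      ⊆ {x | (minpoly ℝ (Matrix.toEuclideanLin M)).IsRoot x} := fun x hx =>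
    Module.End.hasEigenvalue_iff_isRoot.1 hx
  exact (Polynomial.finite_setOf_isRoot
    (minpoly.ne_zero (Algebra.IsIntegral.isIntegral (Matrix.toEuclideanLin M)))).subset hsub

private lemma aux_eig_pos {m : ℕ} {M : Matrix (Fin m) (Fin m) ℝ} (hM : M.PosDef) :
    ∀ x ∈ {μ : ℝ | Module.End.HasEigenvalue (Matrix.toEuclideanLin M) μ}, 0 < x := by
  intro x hx
  obtain ⟨v0, hv0, heq⟩ := aux_eigvec M x hx
  have h1 : 0 < v0 ⬝ᵥ (M *ᵥ v0) := by simpa [star_trivial] using hM.dotProduct_mulVec_pos hv0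
  rw [heq, dotProduct_smul, smul_eq_mul] at h1
  have h2 : 0 < v0 ⬝ᵥ v0 := aux_dotself_pos v0 hv0
  nlinarith [h1, h2]

private lemma aux_eig_ne {m : ℕ} (hm : 0 < m) {M : Matrix (Fin m) (Fin m) ℝ}
    (hM : M.IsHermitian) :
    {μ : ℝ | Module.End.HasEigenvalue (Matrix.toEuclideanLin M) μ}.Nonempty := by
  refine ⟨hM.eigenvalues ⟨0, hm⟩, ?_⟩
  apply Module.End.hasEigenvalue_of_hasEigenvector (x := hM.eigenvectorBasis ⟨0, hm⟩)
  constructor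
  · rw [Module.End.mem_eigenspace_iff]
    have h := hM.mulVec_eigenvectorBasis ⟨0, hm⟩
    apply (WithLp.equiv 2 (Fin m → ℝ)).injective
    simpa using h
  · exact hM.eigenvectorBasis.orthonormal.ne_zero _

open scoped ComplexOrder in
noncomputable def Matrix.PosSemidef.sqrt {n 𝕜 : Type*} [Fintype n] [RCLike 𝕜] [DecidableEq n]
    {A : Matrix n n 𝕜} (hA : A.PosSemidef) : Matrix n n 𝕜 :=
  (hA.1.eigenvectorUnitary : Matrix n n 𝕜) * diagonal ((↑) ∘ (√·) ∘ hA.1.eigenvalues) *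
    (star hA.1.eigenvectorUnitary : Matrix n n 𝕜)

private lemma aux_sqrt_psd {m : ℕ} {M : Matrix (Fin m) (Fin m) ℝ} (hA : M.PosSemidef) :
    hA.sqrt.PosSemidef := by
  unfold Matrix.PosSemidef.sqrt
  rw [star_eq_conjTranspose]
  refine PosSemidef.mul_mul_conjTranspose_same ?_ _
  refine PosSemidef.diagonal fun i => ?_
  simp [Real.sqrt_nonneg]

private lemma aux_sqrt_mul {m : ℕ} {M : Matrix (Fin m) (Fin m) ℝ} (hA : M.PosSemidef) :
    hA.sqrt * hA.sqrt = M := by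
  unfold Matrix.PosSemidef.sqrt
  conv_rhs => rw [hA.1.spectral_theorem]
  rw [Unitary.conjStarAlgAut_apply]
  have hU : (star hA.1.eigenvectorUnitary : Matrix (Fin m) (Fin m) ℝ) *
      (hA.1.eigenvectorUnitary : Matrix (Fin m) (Fin m) ℝ) = 1 := Unitary.coe_star_mul_self _
  have hD : diagonal (RCLike.ofReal ∘ (√·) ∘ hA.1.eigenvalues : Fin m → ℝ) *
      diagonal (RCLike.ofReal ∘ (√·) ∘ hA.1.eigenvalues : Fin m → ℝ)
      = diagonal (RCLike.ofReal ∘ hA.1.eigenvalues : Fin m → ℝ) := by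
    rw [diagonal_mul_diagonal]; congr 1; funext i
    simp [Real.mul_self_sqrt (hA.eigenvalues_nonneg i)]
  calc _ = (hA.1.eigenvectorUnitary : Matrix (Fin m) (Fin m) ℝ) *
        (diagonal (RCLike.ofReal ∘ (√·) ∘ hA.1.eigenvalues : Fin m → ℝ) *
          ((star hA.1.eigenvectorUnitary : Matrix (Fin m) (Fin m) ℝ) *
            (hA.1.eigenvectorUnitary : Matrix (Fin m) (Fin m) ℝ)) *
          diagonal (RCLike.ofReal ∘ (√·) ∘ hA.1.eigenvalues : Fin m → ℝ)) *
        (star hA.1.eigenvectorUnitary : Matrix (Fin m) (Fin m) ℝ) := by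
        simp only [Matrix.mul_assoc]
    _ = _ := by rw [hU, Matrix.mul_one, hD]

set_option maxHeartbeats 2000000 in
/-- Eigenvalue bound for Σ̃^{−1/2}(Σ̃−Σ̂)Σ̃^{−1/2}. -/
theorem stmt9 {m n : ℕ} (A : Matrix (Fin m) (Fin n) ℝ)
    (xt xh : Fin n → ℝ) (xmin xmax : ℝ) (hxmin : 0 < xmin)
    (hxt : ∀ i, xt i ∈ Set.Icc xmin xmax) (hxh : ∀ i, xh i ∈ Set.Icc xmin xmax)
    (hAA : (A * Aᵀ).PosDef)
    (hT : (A * (Matrix.diagonal xt) ^ 2 * Aᵀ).PosDef)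
    (hH : (A * (Matrix.diagonal xh) ^ 2 * Aᵀ).PosDef)
    (μ : ℝ)
    (hμ : Module.End.HasEigenvalue
      (Matrix.toEuclideanLin
        ((hT.inv.posSemidef.sqrt)⁻¹ *
          ((A * (Matrix.diagonal xt) ^ 2 * Aᵀ)⁻¹ - (A * (Matrix.diagonal xh) ^ 2 * Aᵀ)⁻¹) *
          (hT.inv.posSemidef.sqrt)⁻¹)) μ) :
    |μ| ≤ xmax ^ 2 * lamMax (A * Aᵀ) ^ 2 * (⨆ i, |xh i ^ 2 - xt i ^ 2|) /
      (xmin ^ 4 * lamMin (A * Aᵀ) ^ 2) := by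
  classical
  obtain ⟨v0, hv0ne, hMv⟩ := aux_eigvec _ μ hμ
  -- dispatch m = 0
  rcases Nat.eq_zero_or_pos m with hm | hm
  · exact absurd (by subst hm; exact funext fun i => absurd i.2 (by omega)) hv0ne
  set T := A * (Matrix.diagonal xt) ^ 2 * Aᵀ with hTdef
  set H := A * (Matrix.diagonal xh) ^ 2 * Aᵀ with hHdef
  set S := hT.inv.posSemidef.sqrt with hSdef
  have hSps : S.PosSemidef := aux_sqrt_psd hT.inv.posSemidef
  have hSS : S * S = T⁻¹ := aux_sqrt_mul hT.inv.posSemidef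
  have hSsymm : Sᵀ = S := by
    rw [← Matrix.conjTranspose_eq_transpose_of_trivial]; exact hSps.1
  have hSdet : IsUnit S.det := by
    have h1 : S.det * S.det = T⁻¹.det := by rw [← Matrix.det_mul, hSS]
    have h2 : 0 < T⁻¹.det := hT.inv.det_pos
    refine isUnit_iff_ne_zero.2 fun h => ?_
    rw [h, mul_zero] at h1
    exact h2.ne' h1.symm
  have hTdet : IsUnit T.det := Matrix.isUnit_iff_isUnit_det _ |>.1 hT.isUnit
  have hHdet : IsUnit H.det := Matrix.isUnit_iff_isUnit_det _ |>.1 hH.isUnit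
  have hSinvsymm : (S⁻¹)ᵀ = S⁻¹ := by rw [Matrix.transpose_nonsing_inv, hSsymm]
  rw [← hTdef] at hMv
  set w := S⁻¹ *ᵥ v0 with hwdef
  have hv0S : S *ᵥ w = v0 := by
    rw [hwdef, Matrix.mulVec_mulVec, Matrix.mul_nonsing_inv _ hSdet, Matrix.one_mulVec]
  have hwne : w ≠ 0 := by
    intro h
    rw [h, Matrix.mulVec_zero] at hv0S
    exact hv0ne hv0S.symm
  set a := T⁻¹ *ᵥ w with hadef
  set b := H⁻¹ *ᵥ w with hbdef
  have hwa : T *ᵥ a = w := by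
    rw [hadef, Matrix.mulVec_mulVec, Matrix.mul_nonsing_inv _ hTdet, Matrix.one_mulVec]
  have hwb : H *ᵥ b = w := by
    rw [hbdef, Matrix.mulVec_mulVec, Matrix.mul_nonsing_inv _ hHdet, Matrix.one_mulVec]
  set ua := Aᵀ *ᵥ a with huadef
  set ub := Aᵀ *ᵥ b with hubdef
  set qT := w ⬝ᵥ a with hqTdef
  set qH := w ⬝ᵥ b with hqHdef
  -- quadratic form identities
  have hTquad : ∀ x y : Fin m → ℝ,
      x ⬝ᵥ (T *ᵥ y) = ∑ i, xt i ^ 2 * ((Aᵀ *ᵥ x) i * (Aᵀ *ᵥ y) i) := by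
    intro x y
    rw [hTdef, Matrix.diagonal_pow, aux_quad]
    exact Finset.sum_congr rfl fun i _ => by simp [Pi.pow_apply]
  have hHquad : ∀ x y : Fin m → ℝ,
      x ⬝ᵥ (H *ᵥ y) = ∑ i, xh i ^ 2 * ((Aᵀ *ᵥ x) i * (Aᵀ *ᵥ y) i) := by
    intro x y
    rw [hHdef, Matrix.diagonal_pow, aux_quad]
    exact Finset.sum_congr rfl fun i _ => by simp [Pi.pow_apply]
  have hqT1 : qT = ∑ i, xt i ^ 2 * (ua i * ua i) := by
    rw [hqTdef, ← hwa, dotProduct_comm]; exact hTquad a a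
  have hqH1 : qH = ∑ i, xh i ^ 2 * (ub i * ub i) := by
    rw [hqHdef, ← hwb, dotProduct_comm]; exact hHquad b b
  have hqHP : qH = ∑ i, xt i ^ 2 * (ub i * ua i) := by
    rw [hqHdef, dotProduct_comm, ← hwa]; exact hTquad b a
  have hqTQ : qT = ∑ i, xh i ^ 2 * (ua i * ub i) := by
    rw [hqTdef, dotProduct_comm, ← hwb]; exact hHquad a b
  -- the eigen-equation in quadratic-form terms
  have hvv : v0 ⬝ᵥ v0 = qT := by
    conv_lhs => rw [← hv0S]
    rw [Matrix.dotProduct_mulVec, ← Matrix.mulVec_transpose, hSsymm, Matrix.mulVec_mulVec,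
      hSS, dotProduct_comm]
  have hnum : v0 ⬝ᵥ ((S⁻¹ * (T⁻¹ - H⁻¹) * S⁻¹) *ᵥ v0) = qT - qH := by
    rw [← Matrix.mulVec_mulVec, ← Matrix.mulVec_mulVec, Matrix.dotProduct_mulVec,
      ← Matrix.mulVec_transpose, hSinvsymm, Matrix.sub_mulVec, dotProduct_sub]
  have heig : μ * qT = qT - qH := by
    rw [← hnum, hMv, dotProduct_smul, smul_eq_mul, hvv]
  -- positivity
  have hqTpos : 0 < qT := by rw [← hvv]; exact aux_dotself_pos v0 hv0ne
  have hqHpos : 0 < qH := by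
    have h := hH.inv.dotProduct_mulVec_pos hwne
    rw [star_trivial] at h
    exact h
  set α := ∑ i, (ua i) ^ 2 with hαdef
  set β := ∑ i, (ub i) ^ 2 with hβdef
  have hα0 : 0 ≤ α := by
    rw [hαdef]; exact Finset.sum_nonneg fun i _ => sq_nonneg _
  have hβ0 : 0 ≤ β := by
    rw [hβdef]; exact Finset.sum_nonneg fun i _ => sq_nonneg _
  have hxt2 : ∀ i, xmin ^ 2 ≤ xt i ^ 2 := fun i =>
    pow_le_pow_left₀ hxmin.le (hxt i).1 2
  have hxh2 : ∀ i, xmin ^ 2 ≤ xh i ^ 2 := fun i =>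
    pow_le_pow_left₀ hxmin.le (hxh i).1 2
  have hxt2' : ∀ i, xt i ^ 2 ≤ xmax ^ 2 := fun i =>
    pow_le_pow_left₀ (le_trans hxmin.le (hxt i).1) (hxt i).2 2
  have hqTα : xmin ^ 2 * α ≤ qT := by
    rw [hqT1, hαdef, Finset.mul_sum]
    refine Finset.sum_le_sum fun i _ => ?_
    have : ua i * ua i = ua i ^ 2 := (sq (ua i)).symm
    rw [this]
    exact mul_le_mul_of_nonneg_right (hxt2 i) (sq_nonneg _)
  have hqHβ : xmin ^ 2 * β ≤ qH := by
    rw [hqH1, hβdef, Finset.mul_sum]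
    refine Finset.sum_le_sum fun i _ => ?_
    have : ub i * ub i = ub i ^ 2 := (sq (ub i)).symm
    rw [this]
    exact mul_le_mul_of_nonneg_right (hxh2 i) (sq_nonneg _)
  set δ := ⨆ i, |xh i ^ 2 - xt i ^ 2| with hδdef
  have hδi : ∀ i, |xh i ^ 2 - xt i ^ 2| ≤ δ := by
    intro i
    rw [hδdef]
    exact le_ciSup (Set.Finite.bddAbove
      (Set.finite_range fun j => |xh j ^ 2 - xt j ^ 2|)) i
  have hδ0 : 0 ≤ δ := by
    rw [hδdef]
    exact Real.iSup_nonneg fun i => abs_nonneg _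
  set sα := Real.sqrt α with hsαdef
  set sβ := Real.sqrt β with hsβdef
  set sT := Real.sqrt qT with hsTdef
  set sH := Real.sqrt qH with hsHdef
  have hsα0 : 0 ≤ sα := Real.sqrt_nonneg _
  have hsβ0 : 0 ≤ sβ := Real.sqrt_nonneg _
  have hsT0 : 0 ≤ sT := Real.sqrt_nonneg _
  have hsH0 : 0 ≤ sH := Real.sqrt_nonneg _
  have hsTsq : sT * sT = qT := Real.mul_self_sqrt hqTpos.le
  have hsHsq : sH * sH = qH := Real.mul_self_sqrt hqHpos.le
  have hsαsq : sα * sα = α := Real.mul_self_sqrt hα0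
  have hsβsq : sβ * sβ = β := Real.mul_self_sqrt hβ0
  have hcs : ∑ i, |ua i| * |ub i| ≤ sα * sβ := aux_cs ua ub
  -- |qT - qH| ≤ δ * (sα * sβ)
  have hNle : |qT - qH| ≤ δ * (sα * sβ) := by
    have h1 : qT - qH = ∑ i, (xh i ^ 2 - xt i ^ 2) * (ua i * ub i) := by
      rw [hqTQ, hqHP, ← Finset.sum_sub_distrib]
      exact Finset.sum_congr rfl fun i _ => by ring
    rw [h1]
    calc |∑ i, (xh i ^ 2 - xt i ^ 2) * (ua i * ub i)|
        ≤ ∑ i, |(xh i ^ 2 - xt i ^ 2) * (ua i * ub i)| := Finset.abs_sum_le_sum_abs _ _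
      _ ≤ ∑ i, δ * (|ua i| * |ub i|) := by
          refine Finset.sum_le_sum fun i _ => ?_
          rw [abs_mul, abs_mul]
          exact mul_le_mul (hδi i) le_rfl (mul_nonneg (abs_nonneg _) (abs_nonneg _)) hδ0
      _ = δ * ∑ i, |ua i| * |ub i| := by rw [Finset.mul_sum]
      _ ≤ δ * (sα * sβ) := mul_le_mul_of_nonneg_left hcs hδ0
  -- qH ≤ xmax^2 * (sα * sβ)
  have hqHle : qH ≤ xmax ^ 2 * (sα * sβ) := by
    have hxmax2 : (0:ℝ) ≤ xmax ^ 2 := sq_nonneg _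
    calc qH = ∑ i, xt i ^ 2 * (ub i * ua i) := hqHP
      _ ≤ ∑ i, xmax ^ 2 * (|ua i| * |ub i|) := by
          refine Finset.sum_le_sum fun i _ => ?_
          calc xt i ^ 2 * (ub i * ua i) ≤ xt i ^ 2 * |ub i * ua i| :=
                mul_le_mul_of_nonneg_left (le_abs_self _) (sq_nonneg _)
            _ ≤ xmax ^ 2 * (|ua i| * |ub i|) := by
                rw [abs_mul]
                exact mul_le_mul (hxt2' i) (le_of_eq (mul_comm _ _)) (mul_nonneg (abs_nonneg _) (abs_nonneg _)) hxmax2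
      _ = xmax ^ 2 * ∑ i, |ua i| * |ub i| := by rw [Finset.mul_sum]
      _ ≤ xmax ^ 2 * (sα * sβ) := mul_le_mul_of_nonneg_left hcs hxmax2
  -- sqrt comparisons
  have hsαT : xmin * sα ≤ sT := by
    have h : (xmin * sα) ^ 2 ≤ qT := by
      rw [show (xmin * sα) ^ 2 = xmin ^ 2 * (sα * sα) by ring, hsαsq]
      exact hqTα
    rw [hsTdef]
    exact Real.le_sqrt_of_sq_le h
  have hsβH : xmin * sβ ≤ sH := by
    have h : (xmin * sβ) ^ 2 ≤ qH := by
      rw [show (xmin * sβ) ^ 2 = xmin ^ 2 * (sβ * sβ) by ring, hsβsq]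
      exact hqHβ
    rw [hsHdef]
    exact Real.le_sqrt_of_sq_le h
  have hsHα : xmin * sH ≤ xmax ^ 2 * sα := by
    have hsHpos : 0 < sH := Real.sqrt_pos.2 hqHpos
    have h : xmin * (sH * sH) ≤ xmax ^ 2 * sα * sH := by
      rw [hsHsq]
      calc xmin * qH ≤ xmin * (xmax ^ 2 * (sα * sβ)) :=
            mul_le_mul_of_nonneg_left hqHle hxmin.le
        _ = xmax ^ 2 * sα * (xmin * sβ) := by ring
        _ ≤ xmax ^ 2 * sα * sH := by
            refine mul_le_mul_of_nonneg_left hsβH ?_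
            exact mul_nonneg (sq_nonneg _) hsα0
    have h' : (xmin * sH) * sH ≤ (xmax ^ 2 * sα) * sH := by
      rw [mul_assoc]; exact h
    exact le_of_mul_le_mul_right h' hsHpos
  -- core bound : |μ| ≤ δ * xmax^2 / xmin^4
  have hcore : |μ| * qT ≤ δ * xmax ^ 2 / xmin ^ 4 * qT := by
    have h1 : |μ| * qT = |qT - qH| := by
      rw [← heig, abs_mul, abs_of_pos hqTpos]
    have h2 : sβ ≤ sH / xmin := by
      rw [le_div_iff₀ hxmin, mul_comm]; exact hsβH
    have h3 : sH ≤ xmax ^ 2 * sα / xmin := by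
      rw [le_div_iff₀ hxmin, mul_comm]; exact hsHα
    rw [h1]
    calc |qT - qH| ≤ δ * (sα * sβ) := hNle
      _ ≤ δ * (sα * (sH / xmin)) :=
          mul_le_mul_of_nonneg_left (mul_le_mul_of_nonneg_left h2 hsα0) hδ0
      _ ≤ δ * (sα * ((xmax ^ 2 * sα / xmin) / xmin)) := by
          refine mul_le_mul_of_nonneg_left (mul_le_mul_of_nonneg_left ?_ hsα0) hδ0
          exact div_le_div_of_nonneg_right h3 hxmin.le
      _ = δ * xmax ^ 2 / xmin ^ 2 * (sα * sα) := by ring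
      _ = δ * xmax ^ 2 / xmin ^ 2 * α := by rw [hsαsq]
      _ ≤ δ * xmax ^ 2 / xmin ^ 2 * (qT / xmin ^ 2) := by
          refine mul_le_mul_of_nonneg_left ?_ ?_
          · rw [le_div_iff₀ (by positivity : (0:ℝ) < xmin ^ 2), mul_comm]
            exact hqTα
          · have : (0:ℝ) ≤ δ * xmax ^ 2 := mul_nonneg hδ0 (sq_nonneg _)
            exact div_nonneg this (by positivity)
      _ = δ * xmax ^ 2 / xmin ^ 4 * qT := by ring
  have hμbound : |μ| ≤ δ * xmax ^ 2 / xmin ^ 4 :=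
    le_of_mul_le_mul_right hcore hqTpos
  -- eigenvalue set facts for A * Aᵀ
  set E := {μ : ℝ | Module.End.HasEigenvalue (Matrix.toEuclideanLin (A * Aᵀ)) μ} with hEdef
  have hEfin : E.Finite := aux_eig_finite _
  have hEne : E.Nonempty := aux_eig_ne hm hAA.1
  have hEpos : ∀ x ∈ E, 0 < x := aux_eig_pos hAA
  have hminmem : lamMin (A * Aᵀ) ∈ E := hEne.csInf_mem hEfin
  have hmaxmem : lamMax (A * Aᵀ) ∈ E := hEne.csSup_mem hEfin
  have hminpos : 0 < lamMin (A * Aᵀ) := hEpos _ hminmem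
  have hminmax : lamMin (A * Aᵀ) ≤ lamMax (A * Aᵀ) :=
    csInf_le hEfin.bddBelow hmaxmem
  have hmaxpos : 0 < lamMax (A * Aᵀ) := lt_of_lt_of_le hminpos hminmax
  -- conclude
  refine le_trans hμbound ?_
  rw [div_le_div_iff₀ (by positivity) (by positivity)]
  have h1 : lamMin (A * Aᵀ) ^ 2 ≤ lamMax (A * Aᵀ) ^ 2 :=
    pow_le_pow_left₀ hminpos.le hminmax 2
  calc δ * xmax ^ 2 * (xmin ^ 4 * lamMin (A * Aᵀ) ^ 2)
      = δ * xmax ^ 2 * xmin ^ 4 * lamMin (A * Aᵀ) ^ 2 := by ring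
    _ ≤ δ * xmax ^ 2 * xmin ^ 4 * lamMax (A * Aᵀ) ^ 2 := by
        refine mul_le_mul_of_nonneg_left h1 ?_
        exact mul_nonneg (mul_nonneg hδ0 (sq_nonneg _)) (by positivity)
    _ = xmax ^ 2 * lamMax (A * Aᵀ) ^ 2 * δ * xmin ^ 4 := by ring
end
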